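/- arXiv:2102.09878 — 2 statements merged into one kernel-verified Lean document; each statement's English description precedes it below -/
import Mathlib

section
/- Let A be a real matrix written in 3×3 block form with row blocks (s, n, w) and column blocks (s, n, w), A = [[A_ss, A_sn, 0],[A_ns, A_nn, A_nw],[0, A_wn, A_ww]], so that the (s,w) and (w,s) blocks are zero. Let H be an orthogonal matrix of the size of the s row block and set H_s = diag(H, I, I). Let R_s = [[R_ss, R_sn, 0],[0, I, 0],[0, 0, I]] with R_ss invertible (so R_s is invertible). Then the matrix B = H_sᵀ A R_s⁻¹ satisfies B_sw = 0, B_ws = 0, B_nw = A_nw, B_wn = A_wn, and B_ww = A_ww; that is, the block Householder factorization of the separator s introduces no fill-in in any block involving w. -/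
open Matrix

/-- Block Householder factorization of a separator `s` introduces no fill-in in any block
involving `w`: if the `(s,w)` and `(w,s)` blocks of `A` are zero, `H` is orthogonal,
`H_s = diag(H, I, I)`, and `R_s = [[R_ss, R_sn, 0], [0, I, 0], [0, 0, I]]` with `R_ss`
invertible, then `B = H_sᵀ A R_s⁻¹` has `B_sw = 0`, `B_ws = 0`, `B_nw = A_nw`,
`B_wn = A_wn`, `B_ww = A_ww`. -/
theorem block_householder_no_fill_in
    (ms mn mw ns nn nw : ℕ)
    (A : Matrix (Fin ms ⊕ (Fin mn ⊕ Fin mw)) (Fin ns ⊕ (Fin nn ⊕ Fin nw)) ℝ)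
    (hAsw : ∀ (i : Fin ms) (j : Fin nw), A (Sum.inl i) (Sum.inr (Sum.inr j)) = 0)
    (hAws : ∀ (i : Fin mw) (j : Fin ns), A (Sum.inr (Sum.inr i)) (Sum.inl j) = 0)
    (H : Matrix (Fin ms) (Fin ms) ℝ) (hH : Hᵀ * H = 1)
    (Hs : Matrix (Fin ms ⊕ (Fin mn ⊕ Fin mw)) (Fin ms ⊕ (Fin mn ⊕ Fin mw)) ℝ)
    (hHs : Hs = fromBlocks H 0 0 (1 : Matrix (Fin mn ⊕ Fin mw) (Fin mn ⊕ Fin mw) ℝ))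
    (Rss : Matrix (Fin ns) (Fin ns) ℝ) (hRss : IsUnit Rss.det)
    (Rsn : Matrix (Fin ns) (Fin nn) ℝ)
    (Rs : Matrix (Fin ns ⊕ (Fin nn ⊕ Fin nw)) (Fin ns ⊕ (Fin nn ⊕ Fin nw)) ℝ)
    (hRs : Rs = fromBlocks Rss (fromCols Rsn 0) 0
      (1 : Matrix (Fin nn ⊕ Fin nw) (Fin nn ⊕ Fin nw) ℝ))
    (B : Matrix (Fin ms ⊕ (Fin mn ⊕ Fin mw)) (Fin ns ⊕ (Fin nn ⊕ Fin nw)) ℝ)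
    (hB : B = Hsᵀ * A * Rs⁻¹) :
    IsUnit Rs.det ∧
    (∀ (i : Fin ms) (j : Fin nw), B (Sum.inl i) (Sum.inr (Sum.inr j)) = 0) ∧
    (∀ (i : Fin mw) (j : Fin ns), B (Sum.inr (Sum.inr i)) (Sum.inl j) = 0) ∧
    (∀ (i : Fin mn) (j : Fin nw),
      B (Sum.inr (Sum.inl i)) (Sum.inr (Sum.inr j)) = A (Sum.inr (Sum.inl i)) (Sum.inr (Sum.inr j))) ∧
    (∀ (i : Fin mw) (j : Fin nn),
      B (Sum.inr (Sum.inr i)) (Sum.inr (Sum.inl j)) = A (Sum.inr (Sum.inr i)) (Sum.inr (Sum.inl j))) ∧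
    (∀ (i : Fin mw) (j : Fin nw),
      B (Sum.inr (Sum.inr i)) (Sum.inr (Sum.inr j)) = A (Sum.inr (Sum.inr i)) (Sum.inr (Sum.inr j))) := by

  have hdet : IsUnit Rs.det := by
    rw [hRs, det_fromBlocks_zero₂₁]
    simpa using hRss
  set N : Matrix (Fin ns) (Fin nn ⊕ Fin nw) ℝ :=
    fromCols (-(Rss⁻¹ * Rsn)) 0 with hN
  have hinv : Rs * fromBlocks Rss⁻¹ N 0 1 = 1 := by
    rw [hRs, fromBlocks_multiply]
    have h1 : Rss * Rss⁻¹ = 1 := mul_nonsing_inv Rss hRss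
    have h2 : Rss * N + fromCols Rsn 0 = 0 := by
      rw [hN, mul_fromCols]
      ext i (j | j) <;> simp [fromCols, Matrix.mul_neg, ← Matrix.mul_assoc, h1]
    rw [h1, Matrix.mul_one, h2]
    simp [fromBlocks_one]
  have hRsInv : Rs⁻¹ = fromBlocks Rss⁻¹ N 0 1 := inv_eq_right_inv hinv
  refine ⟨hdet, ?_, ?_, ?_, ?_, ?_⟩ <;>
    intro i j <;>
    · subst hB hHs
      rw [hRsInv]
      simp [mul_apply, fromBlocks, Fintype.sum_sum_type, hAsw, hAws, hN, fromCols,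
        Matrix.one_apply, Finset.sum_ite_eq, Finset.sum_ite_eq']
end

section
/- Let A_p = [[I_c, B],[C, D]] be a real block matrix with B of size c×n, C of size n×c, and D of size n×n. Suppose Q is an orthogonal c×c matrix such that the c×2n matrix [Cᵀ, B] equals Q·W, where the first f rows of W (the fine block) have spectral norm at most ε. Set Q_p = diag(Q, I_n). Then: (i) Q_pᵀ A_p Q_p = [[I_c, QᵀB],[CQ, D]]; (ii) the submatrix of QᵀB consisting of its first f rows and the submatrix of CQ consisting of its first f columns each have spectral norm at most ε; and (iii) the matrix obtained from Q_pᵀ A_p Q_p by replacing these two submatrices with zero differs from Q_pᵀ A_p Q_p by a matrix of spectral norm at most 2ε. -/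
open Matrix

/-- The spectral norm (ℓ² → ℓ² operator norm) of a real matrix. -/
noncomputable def specNorm {m n : Type*} [Fintype m] [Fintype n] [DecidableEq n]
    (A : Matrix m n ℝ) : ℝ :=
  ‖LinearMap.toContinuousLinearMap (Matrix.toEuclideanLin A)‖

section Helpers

open scoped Matrix.Norms.L2Operator

lemma specNorm_eq_l2 {m n : Type*} [Fintype m] [Fintype n] [DecidableEq n]
    (A : Matrix m n ℝ) : specNorm A = ‖A‖ := rfl

lemma l2norm_le {m n : Type*} [Fintype m] [Fintype n] [DecidableEq n]
    (A : Matrix m n ℝ) {c : ℝ} (hc : 0 ≤ c)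
    (h : ∀ x : EuclideanSpace ℝ n, ‖(EuclideanSpace.equiv m ℝ).symm (A *ᵥ x)‖ ≤ c * ‖x‖) :
    ‖A‖ ≤ c := by
  rw [Matrix.l2_opNorm_def]
  exact ContinuousLinearMap.opNorm_le_bound _ hc h

lemma l2norm_transpose {m n : Type*} [Fintype m] [Fintype n] [DecidableEq n] [DecidableEq m]
    (A : Matrix m n ℝ) : ‖Aᵀ‖ = ‖A‖ := by
  have : Aᴴ = Aᵀ := by ext i j; simp
  rw [← this, Matrix.l2_opNorm_conjTranspose]

lemma l2norm_submatrix_row {m n α : Type*} [Fintype m] [Fintype n] [Fintype α] [DecidableEq n]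
    (A : Matrix m n ℝ) (e : α → m) (he : Function.Injective e) :
    ‖A.submatrix e id‖ ≤ ‖A‖ := by
  classical
  apply l2norm_le _ (norm_nonneg _)
  intro x
  refine le_trans ?_ (A.l2_opNorm_mulVec x)
  rw [EuclideanSpace.norm_eq, EuclideanSpace.norm_eq]
  apply Real.sqrt_le_sqrt
  have key : ∀ i, ((A.submatrix e id) *ᵥ x) i = (A *ᵥ x) (e i) := fun i => rfl
  simp only [EuclideanSpace.equiv, LinearEquiv.coe_toEquiv_symm, WithLp.linearEquiv_symm_apply,
    PiLp.toLp_apply, key]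
  calc ∑ i, ‖(A *ᵥ x) (e i)‖ ^ 2
      = ∑ j ∈ Finset.univ.image e, ‖(A *ᵥ x) j‖ ^ 2 := by
        rw [Finset.sum_image (fun a _ b _ h => he h)]
    _ ≤ ∑ j, ‖(A *ᵥ x) j‖ ^ 2 :=
        Finset.sum_le_sum_of_subset_of_nonneg (Finset.subset_univ _)
          (fun _ _ _ => by positivity)

lemma l2norm_submatrix_col {m n α : Type*} [Fintype m] [Fintype n] [Fintype α]
    [DecidableEq n] [DecidableEq m] [DecidableEq α]
    (A : Matrix m n ℝ) (e : α → n) (he : Function.Injective e) :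
    ‖A.submatrix id e‖ ≤ ‖A‖ := by
  rw [← l2norm_transpose (A.submatrix id e), ← l2norm_transpose A]
  exact l2norm_submatrix_row Aᵀ e he

lemma l2norm_fromRows_right {α β n : Type*} [Fintype α] [Fintype β] [Fintype n] [DecidableEq n]
    (X : Matrix α n ℝ) : ‖fromRows X (0 : Matrix β n ℝ)‖ ≤ ‖X‖ := by
  apply l2norm_le _ (norm_nonneg _)
  intro x
  refine le_trans ?_ (X.l2_opNorm_mulVec x)
  rw [EuclideanSpace.norm_eq, EuclideanSpace.norm_eq]
  apply Real.sqrt_le_sqrt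
  simp only [EuclideanSpace.equiv, LinearEquiv.coe_toEquiv_symm, WithLp.linearEquiv_symm_apply,
    PiLp.toLp_apply, fromRows_mulVec, Fintype.sum_sum_type, Sum.elim_inl, Sum.elim_inr,
    Matrix.zero_mulVec, Pi.zero_apply, norm_zero]
  simp

lemma l2norm_fromRows_left {α β n : Type*} [Fintype α] [Fintype β] [Fintype n] [DecidableEq n]
    (X : Matrix β n ℝ) : ‖fromRows (0 : Matrix α n ℝ) X‖ ≤ ‖X‖ := by
  apply l2norm_le _ (norm_nonneg _)
  intro x
  refine le_trans ?_ (X.l2_opNorm_mulVec x)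
  rw [EuclideanSpace.norm_eq, EuclideanSpace.norm_eq]
  apply Real.sqrt_le_sqrt
  simp only [EuclideanSpace.equiv, LinearEquiv.coe_toEquiv_symm, WithLp.linearEquiv_symm_apply,
    PiLp.toLp_apply, fromRows_mulVec, Fintype.sum_sum_type, Sum.elim_inl, Sum.elim_inr,
    Matrix.zero_mulVec, Pi.zero_apply, norm_zero]
  simp

lemma l2norm_fromCols_right {α β m : Type*} [Fintype α] [Fintype β] [Fintype m]
    [DecidableEq α] [DecidableEq β] [DecidableEq m] (Y : Matrix m α ℝ) :
    ‖fromCols Y (0 : Matrix m β ℝ)‖ ≤ ‖Y‖ := by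
  rw [← l2norm_transpose (fromCols Y 0), transpose_fromCols, ← l2norm_transpose Y]
  simpa using l2norm_fromRows_right (β := β) Yᵀ

lemma l2norm_fromCols_left {α β m : Type*} [Fintype α] [Fintype β] [Fintype m]
    [DecidableEq α] [DecidableEq β] [DecidableEq m] (Y : Matrix m β ℝ) :
    ‖fromCols (0 : Matrix m α ℝ) Y‖ ≤ ‖Y‖ := by
  rw [← l2norm_transpose (fromCols 0 Y), transpose_fromCols, ← l2norm_transpose Y]
  simpa using l2norm_fromRows_left (α := α) Yᵀ

end Helpers

/-- Sparsification of an interface. The interface index set is `Fin f ⊕ Fin g`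
(`c = f + g`), the first `f` indices being the fine ones. Let
`A_p = [[I, B], [C, D]]` and let `Q` be orthogonal with `[Cᵀ, B] = Q W`, where the fine
(first `f`) rows of `W` have spectral norm at most `ε`. With `Q_p = diag(Q, I)`:
(i) `Q_pᵀ A_p Q_p = [[I, QᵀB], [CQ, D]]`;
(ii) the first `f` rows of `QᵀB` and the first `f` columns of `CQ` have spectral norm
at most `ε`;
(iii) replacing these two submatrices by zero perturbs `Q_pᵀ A_p Q_p` by at most `2ε`
in spectral norm. -/
theorem interface_sparsification
    (f g n : ℕ) (ε : ℝ)
    (B : Matrix (Fin f ⊕ Fin g) (Fin n) ℝ)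
    (C : Matrix (Fin n) (Fin f ⊕ Fin g) ℝ)
    (D : Matrix (Fin n) (Fin n) ℝ)
    (Q : Matrix (Fin f ⊕ Fin g) (Fin f ⊕ Fin g) ℝ) (hQ : Qᵀ * Q = 1)
    (W : Matrix (Fin f ⊕ Fin g) (Fin n ⊕ Fin n) ℝ)
    (hW : fromCols Cᵀ B = Q * W)
    (hfine : specNorm (W.submatrix Sum.inl id) ≤ ε) :
    (fromBlocks Q 0 0 (1 : Matrix (Fin n) (Fin n) ℝ))ᵀ *
        fromBlocks (1 : Matrix (Fin f ⊕ Fin g) (Fin f ⊕ Fin g) ℝ) B C D *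
        fromBlocks Q 0 0 (1 : Matrix (Fin n) (Fin n) ℝ) =
      fromBlocks 1 (Qᵀ * B) (C * Q) D ∧
    specNorm ((Qᵀ * B).submatrix Sum.inl id) ≤ ε ∧
    specNorm ((C * Q).submatrix id Sum.inl) ≤ ε ∧
    specNorm (fromBlocks 1 (Qᵀ * B) (C * Q) D -
        fromBlocks 1
          (fromRows (0 : Matrix (Fin f) (Fin n) ℝ) ((Qᵀ * B).submatrix Sum.inr id))
          (fromCols (0 : Matrix (Fin n) (Fin f) ℝ) ((C * Q).submatrix id Sum.inr))
          D) ≤ 2 * ε := by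
  open scoped Matrix.Norms.L2Operator in
  -- W in terms of the data
  have hW' : W = fromCols (Qᵀ * Cᵀ) (Qᵀ * B) := by
    have : Qᵀ * (Q * W) = W := by rw [← Matrix.mul_assoc, hQ, Matrix.one_mul]
    rw [← this, ← hW, Matrix.mul_fromCols]
  set W₁ : Matrix (Fin f) (Fin n ⊕ Fin n) ℝ := W.submatrix Sum.inl id with hW₁
  have hB1 : (Qᵀ * B).submatrix Sum.inl id = W₁.submatrix id Sum.inr := by
    ext i j
    simp [hW₁, hW', Matrix.fromCols]
  have hC1 : ((C * Q).submatrix id Sum.inl)ᵀ = W₁.submatrix id Sum.inl := by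
    ext i j
    simp [hW₁, hW', Matrix.fromCols, Matrix.mul_apply, mul_comm]
  have hεB : specNorm ((Qᵀ * B).submatrix Sum.inl id) ≤ ε := by
    rw [specNorm_eq_l2, hB1]
    exact le_trans (l2norm_submatrix_col _ _ Sum.inr_injective) hfine
  have hεC : specNorm ((C * Q).submatrix id Sum.inl) ≤ ε := by
    rw [specNorm_eq_l2, ← l2norm_transpose, hC1]
    exact le_trans (l2norm_submatrix_col _ _ Sum.inl_injective) hfine
  refine ⟨?_, hεB, hεC, ?_⟩
  · simp [Matrix.fromBlocks_transpose, Matrix.fromBlocks_multiply, Matrix.mul_assoc, hQ,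
      ← Matrix.mul_assoc, hQ]
  · -- part (iii)
    set X₁ := (Qᵀ * B).submatrix Sum.inl id
    set Y₁ := (C * Q).submatrix id Sum.inl
    have hdiff : fromBlocks 1 (Qᵀ * B) (C * Q) D -
        fromBlocks 1 (fromRows (0 : Matrix (Fin f) (Fin n) ℝ) ((Qᵀ * B).submatrix Sum.inr id))
          (fromCols (0 : Matrix (Fin n) (Fin f) ℝ) ((C * Q).submatrix id Sum.inr)) D =
        fromBlocks 0 (fromRows X₁ 0) 0 0 + fromBlocks 0 0 (fromCols Y₁ 0) 0 := by
      ext (⟨i | i⟩ | i) (⟨j | j⟩ | j) <;>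
        simp [X₁, Y₁, Matrix.fromBlocks, Matrix.fromRows_apply_inl, Matrix.fromRows_apply_inr, Matrix.fromCols]
    rw [specNorm_eq_l2, hdiff]
    have h1 : ‖(fromBlocks 0 (fromRows X₁ 0) 0 0 :
        Matrix ((Fin f ⊕ Fin g) ⊕ Fin n) ((Fin f ⊕ Fin g) ⊕ Fin n) ℝ)‖ ≤ ε := by
      have e1 : (fromBlocks 0 (fromRows X₁ 0) 0 0 :
          Matrix ((Fin f ⊕ Fin g) ⊕ Fin n) ((Fin f ⊕ Fin g) ⊕ Fin n) ℝ) =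
          fromRows (fromCols 0 (fromRows X₁ 0)) 0 := by
        rw [← Matrix.fromRows_fromCols_eq_fromBlocks, Matrix.fromCols_zero]
      rw [e1]
      refine le_trans (l2norm_fromRows_right _) ?_
      refine le_trans (l2norm_fromCols_left _) ?_
      refine le_trans (l2norm_fromRows_right _) ?_
      rw [← specNorm_eq_l2]; exact hεB
    have h2 : ‖(fromBlocks 0 0 (fromCols Y₁ 0) 0 :
        Matrix ((Fin f ⊕ Fin g) ⊕ Fin n) ((Fin f ⊕ Fin g) ⊕ Fin n) ℝ)‖ ≤ ε := by
      have e2 : (fromBlocks 0 0 (fromCols Y₁ 0) 0 :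
          Matrix ((Fin f ⊕ Fin g) ⊕ Fin n) ((Fin f ⊕ Fin g) ⊕ Fin n) ℝ) =
          fromRows 0 (fromCols (fromCols Y₁ 0) 0) := by
        rw [← Matrix.fromRows_fromCols_eq_fromBlocks, Matrix.fromCols_zero]
      rw [e2]
      refine le_trans (l2norm_fromRows_left _) ?_
      refine le_trans (l2norm_fromCols_right _) ?_
      refine le_trans (l2norm_fromCols_right _) ?_
      rw [← specNorm_eq_l2]; exact hεC
    calc ‖_ + _‖ ≤ _ + _ := norm_add_le _ _
      _ ≤ ε + ε := add_le_add h1 h2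
      _ = 2 * ε := by ring
end
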